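/- Let κ be an infinite cardinal and α an ordinal with ω₁ ≤ κ = |α|. Then there exists a function h : κ → α such that h[κ] = α and for every cardinal κ' with ω₁ ≤ κ' < κ, κ' ⊆ h[κ'] (identifying κ' with the set of ordinals below it). -/

import Mathlib

open Cardinal

noncomputable def myN (ν : Ordinal) : ℕ :=
  Classical.choose (Ordinal.lt_omega0.mp (Ordinal.mod_lt ν Ordinal.omega0_ne_zero))

lemma myN_spec (ν : Ordinal) : ν % Ordinal.omega0 = (myN ν : Ordinal) :=
  Classical.choose_spec (Ordinal.lt_omega0.mp (Ordinal.mod_lt ν Ordinal.omega0_ne_zero))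

lemma myDecomp (ν : Ordinal) :
    Ordinal.omega0 * (ν / Ordinal.omega0) + (myN ν : Ordinal) = ν := by
  rw [← myN_spec]; exact Ordinal.div_add_mod ν _

lemma myN_base (q : Ordinal) (k : ℕ) : myN (Ordinal.omega0 * q + k) = k := by
  have h : (Ordinal.omega0 * q + (k : Ordinal)) % Ordinal.omega0 = (k : Ordinal) := by
    rw [Ordinal.mul_add_mod_self, Ordinal.mod_eq_of_lt (Ordinal.nat_lt_omega0 k)]
  have h2 := (myN_spec (Ordinal.omega0 * q + (k : Ordinal))).symm.trans h
  exact_mod_cast h2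

lemma myDiv_base (q : Ordinal) (k : ℕ) :
    (Ordinal.omega0 * q + (k : Ordinal)) / Ordinal.omega0 = q := by
  rw [Ordinal.mul_add_div _ Ordinal.omega0_ne_zero,
    Ordinal.div_eq_zero_of_lt (Ordinal.nat_lt_omega0 k), add_zero]

lemma myAux {c : Cardinal} (hc : ℵ₀ ≤ c) {q : Ordinal} {k : ℕ}
    (hqk : Ordinal.omega0 * q + (k : Ordinal) < c.ord) (m : ℕ) :
    Ordinal.omega0 * q + (m : Ordinal) < c.ord := by
  rw [Cardinal.lt_ord, Ordinal.card_add, Ordinal.card_nat] at hqk ⊢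
  have h1 : (Ordinal.omega0 * q).card < c :=
    lt_of_le_of_lt (self_le_add_right _ _) hqk
  have h2 : (m : Cardinal) < c := lt_of_lt_of_le (Cardinal.nat_lt_aleph0 m) hc
  exact Cardinal.add_lt_of_lt hc h1 h2

theorem stmt_0 (κ : Cardinal) (α : Ordinal) (h1 : Cardinal.aleph 1 ≤ κ)
    (h2 : α.card = κ) :
    ∃ h : Ordinal → Ordinal,
      (∀ ν < κ.ord, h ν < α) ∧
      (∀ β < α, ∃ ν < κ.ord, h ν = β) ∧
      (∀ κ' : Cardinal, Cardinal.aleph 1 ≤ κ' → κ' < κ →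
        ∀ β < κ'.ord, ∃ ν < κ'.ord, h ν = β) := by
  have hκ0 : ℵ₀ ≤ κ := le_trans (by simpa using Cardinal.aleph_le_aleph.mpr (Ordinal.zero_le 1)) h1
  have hord_le : κ.ord ≤ α := by rw [← h2]; exact Cardinal.ord_card_le α
  -- build a surjection g from ordinals below κ.ord onto ordinals below α
  have ecard : #κ.ord.ToType = #α.ToType := by
    rw [Cardinal.mk_toType, Cardinal.mk_toType, Cardinal.card_ord, h2]
  obtain ⟨e⟩ := Cardinal.eq.mp ecard
  set g : Ordinal → Ordinal := fun ν =>
    if hν : ν < κ.ord then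
      ((Ordinal.ToType.mk (o := α)).symm (e ((Ordinal.ToType.mk (o := κ.ord)) ⟨ν, hν⟩)) : Ordinal)
    else 0 with hg
  have hg1 : ∀ ν < κ.ord, g ν < α := by
    intro ν hν
    rw [hg]
    simp only [hν, dif_pos]
    exact ((Ordinal.ToType.mk (o := α)).symm _).2
  have hg2 : ∀ β < α, ∃ ν < κ.ord, g ν = β := by
    intro β hβ
    refine ⟨((Ordinal.ToType.mk (o := κ.ord)).symm (e.symm ((Ordinal.ToType.mk (o := α)) ⟨β, hβ⟩)) : Ordinal),
      ((Ordinal.ToType.mk (o := κ.ord)).symm _).2, ?_⟩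
    rw [hg]
    set x := (Ordinal.ToType.mk (o := κ.ord)).symm (e.symm ((Ordinal.ToType.mk (o := α)) ⟨β, hβ⟩))
    have hx : (↑x : Ordinal) < κ.ord := x.2
    simp only [hx, dif_pos, Subtype.coe_eta]
    show ((Ordinal.ToType.mk (o := α)).symm (e (Ordinal.ToType.mk (o := κ.ord) x)) : Ordinal) = β
    simp [x]
  -- the function h
  refine ⟨fun ν =>
    if Even (myN ν) then Ordinal.omega0 * (ν / Ordinal.omega0) + ((myN ν / 2 : ℕ) : Ordinal)
    else g (Ordinal.omega0 * (ν / Ordinal.omega0) + ((myN ν / 2 : ℕ) : Ordinal)), ?_, ?_, ?_⟩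
  · intro ν hν
    have hle : Ordinal.omega0 * (ν / Ordinal.omega0) + ((myN ν / 2 : ℕ) : Ordinal) ≤ ν := by
      conv_rhs => rw [← myDecomp ν]
      exact add_le_add_right (by exact_mod_cast Nat.cast_le.mpr (Nat.div_le_self _ 2)) _
    by_cases hev : Even (myN ν)
    · simp only [hev, if_pos]
      exact lt_of_le_of_lt hle (lt_of_lt_of_le hν hord_le)
    · simp only [hev, if_neg, not_false_iff]
      exact hg1 _ (lt_of_le_of_lt hle hν)
  · intro β hβ
    obtain ⟨μ, hμ, hgμ⟩ := hg2 β hβ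
    refine ⟨Ordinal.omega0 * (μ / Ordinal.omega0) + ((2 * myN μ + 1 : ℕ) : Ordinal), ?_, ?_⟩
    · have := myDecomp μ
      exact myAux hκ0 (by rw [this]; exact hμ) _
    · have hN := myN_base (μ / Ordinal.omega0) (2 * myN μ + 1)
      have hD := myDiv_base (μ / Ordinal.omega0) (2 * myN μ + 1)
      simp only [hN, hD]
      have hodd : ¬ Even (2 * myN μ + 1) := by simp [Nat.even_add_one, Nat.even_mul]
      simp only [hodd, if_neg, not_false_iff]
      have : (2 * myN μ + 1) / 2 = myN μ := by omega
      rw [this, myDecomp μ, hgμ]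
  · intro κ' h1' h2' β hβ
    have hκ'0 : ℵ₀ ≤ κ' := le_trans (by simpa using Cardinal.aleph_le_aleph.mpr (Ordinal.zero_le 1)) h1'
    refine ⟨Ordinal.omega0 * (β / Ordinal.omega0) + ((2 * myN β : ℕ) : Ordinal), ?_, ?_⟩
    · have := myDecomp β
      exact myAux hκ'0 (by rw [this]; exact hβ) _
    · have hN := myN_base (β / Ordinal.omega0) (2 * myN β)
      have hD := myDiv_base (β / Ordinal.omega0) (2 * myN β)
      simp only [hN, hD]
      have heven : Even (2 * myN β) := even_two_mul _
      simp only [heven, if_pos]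
      have : (2 * myN β) / 2 = myN β := by omega
      rw [this, myDecomp β]
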